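/- Let R be a commutative ring and G a finite group whose order is invertible in R, acting on a commutative R-algebra B by R-algebra automorphisms; let A = B^G be the subalgebra of G-invariant elements. If B is flat as an R-module, then A is flat as an R-module. -/

import Mathlib

/-- The subalgebra of `G`-invariant elements of an `R`-algebra `B` on which a
group `G` acts by `R`-algebra automorphisms. -/
def fixedSubalgebra (G R B : Type*) [Monoid G] [CommSemiring R] [Semiring B]
    [Algebra R B] [MulSemiringAction G B] [SMulCommClass G R B] :
    Subalgebra R B where
  carrier := MulAction.fixedPoints G B
  mul_mem' := fun {x y} hx hy g => by
    rw [smul_mul', hx g, hy g]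
  add_mem' := fun {x y} hx hy g => by
    rw [smul_add, hx g, hy g]
  algebraMap_mem' := fun r g => smul_algebraMap g r

/-- Let `G` be a finite group whose order is invertible in the commutative ring
`R`, acting on a commutative `R`-algebra `B` by `R`-algebra automorphisms, and let
`A = B^G` be the invariant subalgebra.  If `B` is flat as an `R`-module, then `A`
is flat as an `R`-module. -/
theorem stmt_15 {R : Type*} [CommRing R] (G : Type*) [Group G] [Finite G]
    (hord : IsUnit (Nat.card G : R))
    (B : Type*) [CommRing B] [Algebra R B] [MulSemiringAction G B]
    [SMulCommClass G R B]
    (hflat : Module.Flat R B) :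
    Module.Flat R (fixedSubalgebra G R B) := by
  classical
  have := Fintype.ofFinite G
  set A := fixedSubalgebra G R B
  obtain ⟨u, hu⟩ := hord
  -- Reynolds operator
  have hsum : ∀ b : B, (∑ g : G, g • b) ∈ A := by
    intro b g
    rw [Finset.smul_sum]
    exact Fintype.sum_equiv (Equiv.mulLeft g) _ _ (fun h => smul_smul g h b)
  let p : B →ₗ[R] A :=
    { toFun := fun b => (↑u⁻¹ : R) • ⟨∑ g : G, g • b, hsum b⟩
      map_add' := by
        intro x y
        rw [← smul_add]
        ext
        simp [smul_add, Finset.sum_add_distrib]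
      map_smul' := by
        intro r x
        apply Subtype.ext
        show (↑u⁻¹ : R) • ∑ g : G, g • (r • x) = r • ((↑u⁻¹ : R) • ∑ g : G, g • x)
        simp_rw [fun g : G => smul_comm g r x, ← Finset.smul_sum, smul_comm r] }
  apply Module.Flat.of_retract (A.val.toLinearMap) p
  ext a
  have ha : ∀ g : G, g • (a : B) = (a : B) := a.2
  have hs : (∑ g : G, g • (a : B)) = (Nat.card G : R) • (a : B) := by
    simp [ha, Nat.card_eq_fintype_card, Nat.cast_smul_eq_nsmul]
  show (↑u⁻¹ : R) • (∑ g : G, g • (a : B)) = (a : B)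
  rw [hs, ← hu, smul_smul, Units.inv_mul, one_smul]
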